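/- Let a, b be complex numbers such that b + m ≠ 0 for every natural number m, and let x be a complex number. Then for every natural number k, ∑_{j=0}^{k} [(a)_j x^j / ((b)_j · j!)] · [(−x)^{k−j} / (k−j)!] = (b−a)_k (−x)^k / ((b)_k · k!). (This is Kummer's identity e^{−x} · ₁F₁(a; b; x) = ₁F₁(b−a; b; −x) stated at the level of power-series coefficients via the Cauchy product.) -/

import Mathlib

/-- Rising factorial (Pochhammer symbol) `(z)_n` over the complex numbers. -/
noncomputable def poch (z : ℂ) (n : ℕ) : ℂ := (ascPochhammer ℂ n).eval z

lemma poch_zero (z : ℂ) : poch z 0 = 1 := by simp [poch]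

lemma poch_succ_right (z : ℂ) (n : ℕ) : poch z (n+1) = poch z n * (z + n) := by
  simp [poch, ascPochhammer_succ_right]

lemma poch_succ_left (z : ℂ) (n : ℕ) : poch z (n+1) = z * poch (z+1) n := by
  simp [poch, ascPochhammer_succ_left, Polynomial.eval_comp]

lemma poch_add (z : ℂ) (n m : ℕ) : poch z (n + m) = poch z n * poch (z + n) m := by
  have h := ascPochhammer_mul ℂ n m
  have := congrArg (Polynomial.eval z) h
  simpa [poch, Polynomial.eval_comp] using this.symm

lemma poch_ne_zero {b : ℂ} (hb : ∀ m : ℕ, b + (m : ℂ) ≠ 0) (n : ℕ) : poch b n ≠ 0 := by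
  induction n with
  | zero => simp [poch_zero]
  | succ n ihn => rw [poch_succ_right]; exact mul_ne_zero ihn (hb n)

lemma key_vandermonde (a : ℂ) : ∀ (k : ℕ) (b : ℂ),
    ∑ j ∈ Finset.range (k+1),
      (-1:ℂ)^j * (k.choose j : ℂ) * poch a j * poch (b + j) (k - j)
      = poch (b - a) k := by
  intro k
  induction k with
  | zero => intro b; simp [poch_zero]
  | succ k ih =>
    intro b
    set G : ℕ → ℂ := fun j => (-1:ℂ)^j * (k.choose j : ℂ) * poch a j * poch (b + j) (k + 1 - j) with hGdef
    rw [Finset.sum_range_succ']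
    have hterm : ∀ i ∈ Finset.range (k+1),
        (-1:ℂ)^(i+1) * ((k+1).choose (i+1) : ℂ) * poch a (i+1) * poch (b + ((i:ℕ)+1 : ℕ)) (k + 1 - (i+1))
        = (b - a) * ((-1:ℂ)^i * (k.choose i : ℂ) * poch a i * poch ((b+1) + i) (k - i))
          + (G (i+1) - G i) := by
      intro i hi
      have hik : i ≤ k := Nat.lt_succ_iff.mp (Finset.mem_range.mp hi)
      have hsub : k + 1 - (i+1) = k - i := Nat.succ_sub_succ k i
      have hsub2 : k + 1 - i = (k - i) + 1 := by omega
      have hchoose : ((k+1).choose (i+1) : ℂ) = (k.choose i : ℂ) + (k.choose (i+1) : ℂ) := by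
        rw [Nat.choose_succ_succ]; push_cast; ring
      simp only [hGdef, hsub, hsub2, hchoose]
      rw [poch_succ_right a i, poch_succ_left (b + i) (k - i)]
      have hc1 : b + ((i:ℕ)+1 : ℕ) = (b + i) + 1 := by push_cast; ring
      have hc2 : (b+1) + (i:ℂ) = (b + i) + 1 := by ring
      rw [hc1, hc2]
      ring
    rw [Finset.sum_congr rfl hterm, Finset.sum_add_distrib, ← Finset.mul_sum,
      ih (b+1), Finset.sum_range_sub G]
    have hG0 : G 0 = poch b (k+1) := by simp [hGdef, poch]
    have hGk : G (k+1) = 0 := by simp [hGdef, Nat.choose_succ_self]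
    have hlast : (-1:ℂ)^0 * ((k+1).choose 0 : ℂ) * poch a 0 * poch (b + ((0:ℕ) : ℕ)) (k + 1 - 0) = poch b (k+1) := by
      simp [poch_zero]
    rw [hG0, hGk, hlast]
    have : poch (b - a) (k+1) = (b - a) * poch (b - a + 1) k := poch_succ_left _ _
    rw [this, show b - a + 1 = b + 1 - a by ring]
    ring

/-- Kummer's identity at the level of power-series coefficients. -/
theorem stmt_5 (a b x : ℂ) (hb : ∀ m : ℕ, b + (m : ℂ) ≠ 0) (k : ℕ) :
    ∑ j ∈ Finset.range (k + 1),
      (poch a j * x ^ j / (poch b j * (j.factorial : ℂ))) *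
        ((-x) ^ (k - j) / ((k - j).factorial : ℂ))
      = poch (b - a) k * (-x) ^ k / (poch b k * (k.factorial : ℂ)) := by
  have hterm : ∀ j ∈ Finset.range (k+1),
      (poch a j * x ^ j / (poch b j * (j.factorial : ℂ))) *
        ((-x) ^ (k - j) / ((k - j).factorial : ℂ))
      = ((-1:ℂ)^j * (k.choose j : ℂ) * poch a j * poch (b + j) (k - j)) *
          ((-x) ^ k / (poch b k * (k.factorial : ℂ))) := by
    intro j hj
    have hjk : j ≤ k := Nat.lt_succ_iff.mp (Finset.mem_range.mp hj)
    obtain ⟨M, rfl⟩ : ∃ M, k = j + M := ⟨k - j, (Nat.add_sub_cancel' hjk).symm⟩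
    have hM : j + M - j = M := Nat.add_sub_cancel_left j M
    have hpb : poch b (j + M) = poch b j * poch (b + j) M := poch_add b j M
    have hfact : ((j+M).factorial : ℂ) = ((j+M).choose j : ℂ) * (j.factorial : ℂ) * (M.factorial : ℂ) := by
      rw [← Nat.choose_mul_factorial_mul_factorial (Nat.le_add_right j M)]
      push_cast [hM]
      ring
    have hpow : (-x) ^ (j + M) = (-1:ℂ)^j * x ^ j * (-x) ^ M := by
      rw [pow_add, neg_pow x j]
    have hchoose_ne : ((j+M).choose j : ℂ) ≠ 0 := by
      exact_mod_cast Nat.cast_ne_zero.mpr (Nat.choose_pos (Nat.le_add_right j M)).ne'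
    have hbj : poch b j ≠ 0 := poch_ne_zero hb j
    have hbjM : poch (b + j) M ≠ 0 := by
      intro h0
      exact poch_ne_zero hb (j + M) (by rw [hpb, h0, mul_zero])
    have hjf : (j.factorial : ℂ) ≠ 0 := Nat.cast_ne_zero.mpr j.factorial_ne_zero
    have hMf : (M.factorial : ℂ) ≠ 0 := Nat.cast_ne_zero.mpr M.factorial_ne_zero
    have hsq : (-1:ℂ)^j * (-1:ℂ)^j = 1 := by
      rw [← mul_pow]; norm_num
    rw [hM, hpb, hfact, hpow]
    field_simp
    linear_combination (poch a j * x ^ j * (-x) ^ M) * hsq.symm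
  rw [Finset.sum_congr rfl hterm, ← Finset.sum_mul, key_vandermonde a k b, mul_div_assoc]
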